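/- Let G = (V, E) be a graph with a linear order < on E. If F = (V, A_f^1) and F' = (V, A_f^2) are distinct spanning forests of G, A_i^1 ⊆ E_i(F), A_e^1 ⊆ E_e(F), A_i^2 ⊆ E_i(F'), A_e^2 ⊆ E_e(F'), then (A_f^1 \ A_i^1) ∪ A_e^1 ≠ (A_f^2 \ A_i^2) ∪ A_e^2. -/

import Mathlib

open Finset

attribute [local instance] Classical.propDecidable

/-- A multigraph on vertex type `V` with edge index type `E` is given by a map
`ends : E → Sym2 V` (loops and parallel edges are allowed).  For an edge subset
`A ⊆ E`, `edgeGraph ends A` is the simple graph on `V` whose adjacency is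
witnessed by some edge of `A`; it determines the connected components of the
spanning subgraph `(V, A)`. -/
def edgeGraph {V E : Type} (ends : E → Sym2 V) (A : Finset E) : SimpleGraph V where
  Adj a b := a ≠ b ∧ ∃ e ∈ A, ends e = s(a, b)
  symm := ⟨by
    rintro a b ⟨hab, e, he, hs⟩
    exact ⟨Ne.symm hab, e, he, by rw [hs, Sym2.eq_swap]⟩⟩
  loopless := ⟨by rintro a ⟨h, -⟩; exact h rfl⟩

/-- `kc ends A` is the number of connected components of the spanning subgraph `(V, A)`. -/
noncomputable def kc {V E : Type} (ends : E → Sym2 V) (A : Finset E) : ℕ :=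
  Nat.card (edgeGraph ends A).ConnectedComponent

/-- `(V, A)` is a spanning forest of `(V, E)`: it is a forest
(`|A| + k((V,A)) = |V|`, which rules out loops, parallel edges and cycles)
with as many connected components as the whole graph. -/
def IsSpanningForest {V E : Type} [Fintype V] [Fintype E] (ends : E → Sym2 V)
    (A : Finset E) : Prop :=
  A.card + kc ends A = Fintype.card V ∧ kc ends A = kc ends Finset.univ

/-- `F - e + f`. -/
def swapEdge {E : Type} [DecidableEq E] (A : Finset E) (e f : E) : Finset E :=
  insert f (A.erase e)

/-- `e` is internally active in the spanning forest `(V, A)`. -/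
def InternallyActive {V E : Type} [Fintype V] [Fintype E] [DecidableEq E] [LinearOrder E]
    (ends : E → Sym2 V) (A : Finset E) (e : E) : Prop :=
  e ∈ A ∧ ¬ ∃ f, f ∉ A ∧ e < f ∧ IsSpanningForest ends (swapEdge A e f)

/-- `f` is externally active in the spanning forest `(V, A)`. -/
def ExternallyActive {V E : Type} [Fintype V] [Fintype E] [DecidableEq E] [LinearOrder E]
    (ends : E → Sym2 V) (A : Finset E) (f : E) : Prop :=
  f ∉ A ∧ ¬ ∃ e, e ∈ A ∧ f < e ∧ IsSpanningForest ends (swapEdge A e f)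

/-- The set `E_i(F)` of internally active edges of the spanning forest `F = (V, A)`. -/
noncomputable def intAct {V E : Type} [Fintype V] [Fintype E] [DecidableEq E] [LinearOrder E]
    (ends : E → Sym2 V) (A : Finset E) : Finset E :=
  Finset.univ.filter (InternallyActive ends A)

/-- The set `E_e(F)` of externally active edges of the spanning forest `F = (V, A)`. -/
noncomputable def extAct {V E : Type} [Fintype V] [Fintype E] [DecidableEq E] [LinearOrder E]
    (ends : E → Sym2 V) (A : Finset E) : Finset E :=
  Finset.univ.filter (ExternallyActive ends A)

section Aux

open SimpleGraph

variable {V E : Type} (ends : E → Sym2 V)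

private lemma exists_eq_sym2 (z : Sym2 V) : ∃ x y, z = s(x, y) := by
  induction z using Sym2.ind with | _ x y => exact ⟨x, y, rfl⟩

private lemma edgeGraph_mono {A B : Finset E} (h : A ⊆ B) :
    edgeGraph ends A ≤ edgeGraph ends B := by
  rintro a b ⟨hab, e, he, hs⟩
  exact ⟨hab, e, h he, hs⟩

private lemma kc_congr {A B : Finset E}
    (h : ∀ u v, (edgeGraph ends A).Reachable u v ↔ (edgeGraph ends B).Reachable u v) :
    kc ends A = kc ends B := by
  refine Nat.card_congr ⟨Quot.map id fun u v huv => (h u v).mp huv,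
    Quot.map id fun u v huv => (h u v).mpr huv, ?_, ?_⟩ <;>
  · rintro ⟨v⟩
    rfl

private lemma adj_insert [DecidableEq E] {A : Finset E} {e : E} {p q : V} :
    (edgeGraph ends (insert e A)).Adj p q ↔
      (edgeGraph ends A).Adj p q ∨ (p ≠ q ∧ ends e = s(p, q)) := by
  constructor
  · rintro ⟨hpq, f, hf, hs⟩
    rcases Finset.mem_insert.mp hf with rfl | hf
    · exact Or.inr ⟨hpq, hs⟩
    · exact Or.inl ⟨hpq, f, hf, hs⟩
  · rintro (⟨hpq, f, hf, hs⟩ | ⟨hpq, hs⟩)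
    · exact ⟨hpq, f, Finset.mem_insert_of_mem hf, hs⟩
    · exact ⟨hpq, e, Finset.mem_insert_self e A, hs⟩

private lemma reachable_insert_of_reachable [DecidableEq E] {A : Finset E} {e : E} {x y : V}
    (he : ends e = s(x, y)) (hxy : (edgeGraph ends A).Reachable x y) {p q : V} :
    (edgeGraph ends (insert e A)).Reachable p q ↔ (edgeGraph ends A).Reachable p q := by
  constructor
  · rintro ⟨w⟩
    induction w with
    | nil => exact Reachable.refl _
    | cons h w ih =>
      rcases (adj_insert ends).mp h with h' | ⟨hne, hs⟩
      · exact h'.reachable.trans ih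
      · rw [he] at hs
        rcases Sym2.eq_iff.mp hs with ⟨rfl, rfl⟩ | ⟨rfl, rfl⟩
        · exact hxy.trans ih
        · exact hxy.symm.trans ih
  · exact fun h => h.mono (edgeGraph_mono ends (Finset.subset_insert e A))

private lemma reach_insert_iff [DecidableEq E] {A : Finset E} {e : E} {x y : V} (he : ends e = s(x, y))
    {p q : V} :
    (edgeGraph ends (insert e A)).Reachable p q ↔
      (edgeGraph ends A).Reachable p q ∨
      ((edgeGraph ends A).Reachable p x ∧ (edgeGraph ends A).Reachable y q) ∨
      ((edgeGraph ends A).Reachable p y ∧ (edgeGraph ends A).Reachable x q) := by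
  constructor
  · rintro ⟨w⟩
    induction w with
    | nil => exact Or.inl (Reachable.refl _)
    | cons h w ih =>
      rcases (adj_insert ends).mp h with h' | ⟨hne, hs⟩
      · rcases ih with h1 | ⟨h1, h2⟩ | ⟨h1, h2⟩
        · exact Or.inl (h'.reachable.trans h1)
        · exact Or.inr (Or.inl ⟨h'.reachable.trans h1, h2⟩)
        · exact Or.inr (Or.inr ⟨h'.reachable.trans h1, h2⟩)
      · rw [he] at hs
        rcases Sym2.eq_iff.mp hs with ⟨rfl, rfl⟩ | ⟨rfl, rfl⟩
        · rcases ih with h1 | ⟨h1, h2⟩ | ⟨h1, h2⟩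
          · exact Or.inr (Or.inl ⟨Reachable.refl _, h1⟩)
          · exact Or.inr (Or.inl ⟨Reachable.refl _, h2⟩)
          · exact Or.inl h2
        · rcases ih with h1 | ⟨h1, h2⟩ | ⟨h1, h2⟩
          · exact Or.inr (Or.inr ⟨Reachable.refl _, h1⟩)
          · exact Or.inl h2
          · exact Or.inr (Or.inr ⟨Reachable.refl _, h2⟩)
  · have hmono : (edgeGraph ends A) ≤ edgeGraph ends (insert e A) :=
      edgeGraph_mono ends (Finset.subset_insert e A)
    have hxy' : (edgeGraph ends (insert e A)).Reachable x y := by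
      by_cases hxyeq : x = y
      · exact hxyeq ▸ Reachable.refl _
      · exact (Adj.reachable ⟨hxyeq, e, Finset.mem_insert_self e A, he⟩)
    rintro (h1 | ⟨h1, h2⟩ | ⟨h1, h2⟩)
    · exact h1.mono hmono
    · exact ((h1.mono hmono).trans hxy').trans (h2.mono hmono)
    · exact ((h1.mono hmono).trans hxy'.symm).trans (h2.mono hmono)

end Aux
section Aux2

open SimpleGraph

variable {V E : Type} (ends : E → Sym2 V)

private lemma kc_insert_merge [Fintype V] [DecidableEq E] {A : Finset E} {e : E} {x y : V}
    (he : ends e = s(x, y)) (hxy : ¬ (edgeGraph ends A).Reachable x y) :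
    kc ends (insert e A) + 1 = kc ends A := by
  set G := edgeGraph ends A with hG
  set G' := edgeGraph ends (insert e A) with hG'
  have hmono : G ≤ G' := edgeGraph_mono ends (Finset.subset_insert e A)
  set φ : G.ConnectedComponent → G'.ConnectedComponent :=
    SimpleGraph.ConnectedComponent.map (SimpleGraph.Hom.ofLE hmono) with hφ
  have hφmk : ∀ v : V, φ (G.connectedComponentMk v) = G'.connectedComponentMk v := fun v => rfl
  have hchar : ∀ p q : V, φ (G.connectedComponentMk p) = φ (G.connectedComponentMk q) ↔
      (G.Reachable p q ∨ (G.Reachable p x ∧ G.Reachable y q) ∨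
        (G.Reachable p y ∧ G.Reachable x q)) := by
    intro p q
    rw [hφmk, hφmk, SimpleGraph.ConnectedComponent.eq]
    exact reach_insert_iff ends he
  have hne : G.connectedComponentMk x ≠ G.connectedComponentMk y := by
    intro h
    exact hxy (SimpleGraph.ConnectedComponent.eq.mp h)
  -- the bijection between components of G other than that of y, and components of G'
  have hinj : ∀ c₁ c₂ : G.ConnectedComponent, c₁ ≠ G.connectedComponentMk y →
      c₂ ≠ G.connectedComponentMk y → φ c₁ = φ c₂ → c₁ = c₂ := by
    refine SimpleGraph.ConnectedComponent.ind₂ ?_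
    intro p q h1 h2 heq
    rcases (hchar p q).mp heq with h | ⟨ha, hb⟩ | ⟨ha, hb⟩
    · exact SimpleGraph.ConnectedComponent.sound h
    · exact absurd (SimpleGraph.ConnectedComponent.sound hb.symm) h2
    · exact absurd (SimpleGraph.ConnectedComponent.sound ha) h1
  have hsurj : ∀ c' : G'.ConnectedComponent,
      ∃ c : G.ConnectedComponent, c ≠ G.connectedComponentMk y ∧ φ c = c' := by
    refine SimpleGraph.ConnectedComponent.ind ?_
    intro p
    by_cases hp : G.Reachable p y
    · refine ⟨G.connectedComponentMk x, hne, ?_⟩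
      rw [hφmk, SimpleGraph.ConnectedComponent.eq]
      exact (reach_insert_iff ends he).mpr (Or.inr (Or.inl ⟨Reachable.refl _, hp.symm⟩))
    · exact ⟨G.connectedComponentMk p, fun h =>
        hp (SimpleGraph.ConnectedComponent.eq.mp h), rfl⟩
  -- counting
  letI : Fintype G.ConnectedComponent := Fintype.ofFinite _
  letI : Fintype G'.ConnectedComponent := Fintype.ofFinite _
  have hbij : Function.Bijective
      (fun c : {c : G.ConnectedComponent // c ≠ G.connectedComponentMk y} => φ c.1) := by
    constructor
    · rintro ⟨c₁, h1⟩ ⟨c₂, h2⟩ h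
      exact Subtype.ext (hinj c₁ c₂ h1 h2 h)
    · intro c'
      obtain ⟨c, hc, hcc⟩ := hsurj c'
      exact ⟨⟨c, hc⟩, hcc⟩
  have hcard1 : Nat.card {c : G.ConnectedComponent // c ≠ G.connectedComponentMk y} =
      Nat.card G'.ConnectedComponent := Nat.card_eq_of_bijective _ hbij
  have hcard2 : Fintype.card {c : G.ConnectedComponent // c ≠ G.connectedComponentMk y} =
      Fintype.card G.ConnectedComponent - 1 := by
    have := Fintype.card_subtype_compl (fun c : G.ConnectedComponent =>
      c = G.connectedComponentMk y)
    rw [Fintype.card_subtype_eq] at this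
    exact this
  have hpos : 0 < Fintype.card G.ConnectedComponent :=
    Fintype.card_pos_iff.mpr ⟨G.connectedComponentMk y⟩
  have h1 : kc ends (insert e A) = Nat.card G'.ConnectedComponent := rfl
  have h2 : kc ends A = Nat.card G.ConnectedComponent := rfl
  rw [h1, h2, ← hcard1]
  rw [Nat.card_eq_fintype_card, Nat.card_eq_fintype_card, hcard2]
  omega

private lemma kc_empty [Fintype V] : kc ends (∅ : Finset E) = Fintype.card V := by
  have hbot : ∀ u v : V, (edgeGraph ends (∅ : Finset E)).Reachable u v ↔ u = v := by
    intro u v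
    constructor
    · rintro ⟨w⟩
      induction w with
      | nil => rfl
      | cons h w ih => exact absurd h.2 (by simp)
    · rintro rfl; exact Reachable.refl _
  refine Eq.trans (Nat.card_congr ⟨Quot.lift id (fun u v h => (hbot u v).mp h), fun v =>
    (edgeGraph ends ∅).connectedComponentMk v, ?_, fun v => rfl⟩) Nat.card_eq_fintype_card
  rintro ⟨v⟩
  rfl

private lemma le_card_add_kc [Fintype V] [DecidableEq E] (A : Finset E) :
    Fintype.card V ≤ A.card + kc ends A := by
  induction A using Finset.induction_on with
  | empty => simp [kc_empty]
  | @insert e A he ih =>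
    obtain ⟨x, y, hxy⟩ := exists_eq_sym2 (ends e)
    rw [Finset.card_insert_of_notMem he]
    by_cases hr : (edgeGraph ends A).Reachable x y
    · have : kc ends (insert e A) = kc ends A :=
        kc_congr ends fun u v => reachable_insert_of_reachable ends hxy hr
      omega
    · have : kc ends (insert e A) + 1 = kc ends A := kc_insert_merge ends hxy hr
      omega

private lemma forest_bridge [Fintype V] [DecidableEq E] {A : Finset E}
    (hA : A.card + kc ends A = Fintype.card V) {b : E} (hb : b ∈ A) {x y : V}
    (he : ends b = s(x, y)) :
    ¬ (edgeGraph ends (A.erase b)).Reachable x y := by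
  intro hr
  have h1 : kc ends (insert b (A.erase b)) = kc ends (A.erase b) :=
    kc_congr ends fun p q => reachable_insert_of_reachable ends he hr
  rw [Finset.insert_erase hb] at h1
  have h2 := le_card_add_kc ends (A.erase b)
  have h3 : (A.erase b).card + 1 = A.card := Finset.card_erase_add_one hb
  omega

private lemma reachable_of_spanning [Fintype V] [Fintype E] {A : Finset E}
    (hA : kc ends A = kc ends (Finset.univ : Finset E)) {u v : V}
    (hr : (edgeGraph ends (Finset.univ : Finset E)).Reachable u v) :
    (edgeGraph ends A).Reachable u v := by
  classical
  set G := edgeGraph ends A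
  set G' := edgeGraph ends (Finset.univ : Finset E)
  have hmono : G ≤ G' := edgeGraph_mono ends (Finset.subset_univ A)
  set φ : G.ConnectedComponent → G'.ConnectedComponent :=
    SimpleGraph.ConnectedComponent.map (SimpleGraph.Hom.ofLE hmono) with hφ
  letI : Fintype G.ConnectedComponent := Fintype.ofFinite _
  letI : Fintype G'.ConnectedComponent := Fintype.ofFinite _
  have hsurj : Function.Surjective φ := by
    intro c'
    refine SimpleGraph.ConnectedComponent.ind (fun p => ⟨G.connectedComponentMk p, rfl⟩) c'
  have hcard : Fintype.card G.ConnectedComponent = Fintype.card G'.ConnectedComponent := by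
    have := hA
    rwa [kc, kc, Nat.card_eq_fintype_card, Nat.card_eq_fintype_card] at this
  have hbij : Function.Bijective φ :=
    (Fintype.bijective_iff_surjective_and_card φ).mpr ⟨hsurj, hcard⟩
  have h := hbij.injective (a₁ := G.connectedComponentMk u) (a₂ := G.connectedComponentMk v)
    (SimpleGraph.ConnectedComponent.sound hr)
  exact SimpleGraph.ConnectedComponent.eq.mp h

end Aux2
section Aux3

open SimpleGraph

variable {V E : Type} (ends : E → Sym2 V)

private lemma reachable_erase_of_walk [DecidableEq E] {A : Finset E} {b : E} {p q : V}
    (w : (edgeGraph ends A).Walk p q) (hw : ends b ∉ w.edges) :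
    (edgeGraph ends (A.erase b)).Reachable p q := by
  induction w with
  | nil => exact Reachable.refl _
  | @cons p r q h w ih =>
    rw [SimpleGraph.Walk.edges_cons, List.mem_cons] at hw
    push_neg at hw
    obtain ⟨hne, e, heA, hse⟩ := h
    have heb : e ≠ b := by
      rintro rfl
      exact hw.1 hse
    have hadj : (edgeGraph ends (A.erase b)).Adj p r :=
      ⟨hne, e, Finset.mem_erase.mpr ⟨heb, heA⟩, hse⟩
    exact hadj.reachable.trans (ih hw.2)

private lemma key_exists_aux [DecidableEq E] {B : Finset E}
    (hbridge : ∀ b ∈ B, ∀ x y, ends b = s(x, y) →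
      ¬ (edgeGraph ends (B.erase b)).Reachable x y)
    {H : SimpleGraph V} {u v : V} (w : (edgeGraph ends B).Walk u v) :
    w.IsPath → ¬ H.Reachable u v →
    ∃ b ∈ B, ∃ x y, ends b = s(x, y) ∧ ¬ H.Reachable x y ∧
      ¬ (edgeGraph ends (B.erase b)).Reachable u v := by
  induction w with
  | nil => exact fun _ hH => absurd (Reachable.refl _) hH
  | @cons u m v h w ih =>
    intro hwp hH
    obtain ⟨hnum, e₁, he₁B, hs₁⟩ := id h
    by_cases hum : H.Reachable u m
    · have hmv : ¬ H.Reachable m v := fun h' => hH (hum.trans h')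
      obtain ⟨b, hbB, x, y, hbxy, hHxy, hbw⟩ := ih hwp.of_cons hmv
      refine ⟨b, hbB, x, y, hbxy, hHxy, fun hr => ?_⟩
      have he₁b : e₁ ≠ b := by
        rintro rfl
        rw [hbxy] at hs₁
        rcases Sym2.eq_iff.mp hs₁.symm with ⟨rfl, rfl⟩ | ⟨rfl, rfl⟩
        · exact hHxy hum
        · exact hHxy hum.symm
      have hadj : (edgeGraph ends (B.erase b)).Adj u m :=
        ⟨hnum, e₁, Finset.mem_erase.mpr ⟨he₁b, he₁B⟩, hs₁⟩
      exact hbw (hadj.symm.reachable.trans hr)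
    · refine ⟨e₁, he₁B, u, m, hs₁, hum, fun hr => ?_⟩
      have hbr := hbridge e₁ he₁B u m hs₁
      have hnodup := hwp.isTrail.edges_nodup
      rw [SimpleGraph.Walk.edges_cons] at hnodup
      have hs : s(u, m) ∉ w.edges := (List.nodup_cons.mp hnodup).1
      have hwv : (edgeGraph ends (B.erase e₁)).Reachable m v :=
        reachable_erase_of_walk ends w (by rw [hs₁]; exact hs)
      exact hbr (hr.trans hwv.symm)

private lemma key_exists [DecidableEq E] {B : Finset E}
    (hbridge : ∀ b ∈ B, ∀ x y, ends b = s(x, y) →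
      ¬ (edgeGraph ends (B.erase b)).Reachable x y)
    {H : SimpleGraph V} {u v : V}
    (hBuv : (edgeGraph ends B).Reachable u v) (hH : ¬ H.Reachable u v) :
    ∃ b ∈ B, ∃ x y, ends b = s(x, y) ∧ ¬ H.Reachable x y ∧
      ¬ (edgeGraph ends (B.erase b)).Reachable u v := by
  classical
  obtain ⟨w0⟩ := hBuv
  obtain ⟨w, hwp⟩ := w0.toPath
  exact key_exists_aux ends hbridge w hwp hH

end Aux3
section Aux4

open SimpleGraph

private lemma main_aux {V E : Type} [Fintype V] [Fintype E] [DecidableEq E] [LinearOrder E]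
    (ends : E → Sym2 V) (A₁ A₂ S : Finset E)
    (hF₁ : IsSpanningForest ends A₁) (hF₂ : IsSpanningForest ends A₂)
    (a : E) (ha₁ : a ∈ A₁) (ha₂ : a ∉ A₂)
    (hmax : ∀ b, b ∈ A₂ → b ∉ A₁ → b < a)
    (hEA₁ : ∀ e, e ∈ S → e ∉ A₁ → ExternallyActive ends A₁ e)
    (hIA₂ : ∀ e, e ∈ A₂ → e ∉ S → InternallyActive ends A₂ e) : False := by
  obtain ⟨u, v, hauv⟩ := exists_eq_sym2 (ends a)
  have hbr₁ : ¬ (edgeGraph ends (A₁.erase a)).Reachable u v :=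
    forest_bridge ends hF₁.1 ha₁ hauv
  have huv : u ≠ v := by rintro rfl; exact hbr₁ (Reachable.refl _)
  have hruv₂ : (edgeGraph ends A₂).Reachable u v :=
    reachable_of_spanning ends hF₂.2
      (Adj.reachable ⟨huv, a, Finset.mem_univ a, hauv⟩)
  have hbridges : ∀ b ∈ A₂, ∀ x y, ends b = s(x, y) →
      ¬ (edgeGraph ends (A₂.erase b)).Reachable x y :=
    fun b hb x y hxy => forest_bridge ends hF₂.1 hb hxy
  obtain ⟨b, hbA₂, x, y, hbxy, hxy₁, hbuv₂⟩ := key_exists ends hbridges hruv₂ hbr₁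
  have hxy : x ≠ y := by rintro rfl; exact hxy₁ (Reachable.refl _)
  have hba' : b ≠ a := fun h => ha₂ (h ▸ hbA₂)
  have hbA₁ : b ∉ A₁ := fun hb₁ =>
    hxy₁ (Adj.reachable ⟨hxy, b, Finset.mem_erase.mpr ⟨hba', hb₁⟩, hbxy⟩)
  have hba : b < a := hmax b hbA₂ hbA₁
  -- A₁ - a + b is a spanning forest
  have hkc₁ : kc ends A₁ + 1 = kc ends (A₁.erase a) := by
    have h := kc_insert_merge ends hauv hbr₁
    rwa [Finset.insert_erase ha₁] at h
  have hSF₁ : IsSpanningForest ends (swapEdge A₁ a b) := by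
    have hkcs : kc ends (insert b (A₁.erase a)) + 1 = kc ends (A₁.erase a) :=
      kc_insert_merge ends hbxy hxy₁
    have hcard : (insert b (A₁.erase a)).card = A₁.card := by
      rw [Finset.card_insert_of_notMem (fun h => hbA₁ (Finset.mem_of_mem_erase h)),
        Finset.card_erase_of_mem ha₁]
      have : 0 < A₁.card := Finset.card_pos.mpr ⟨a, ha₁⟩
      omega
    have hkc : kc ends (insert b (A₁.erase a)) = kc ends A₁ := by omega
    exact ⟨by rw [swapEdge, hcard, hkc]; exact hF₁.1,
      by rw [swapEdge, hkc]; exact hF₁.2⟩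
  -- A₂ - b + a is a spanning forest
  have hkc₂ : kc ends A₂ + 1 = kc ends (A₂.erase b) := by
    have h := kc_insert_merge ends hbxy (hbridges b hbA₂ x y hbxy)
    rwa [Finset.insert_erase hbA₂] at h
  have hSF₂ : IsSpanningForest ends (swapEdge A₂ b a) := by
    have hkcs : kc ends (insert a (A₂.erase b)) + 1 = kc ends (A₂.erase b) :=
      kc_insert_merge ends hauv hbuv₂
    have hcard : (insert a (A₂.erase b)).card = A₂.card := by
      rw [Finset.card_insert_of_notMem (fun h => ha₂ (Finset.mem_of_mem_erase h)),
        Finset.card_erase_of_mem hbA₂]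
      have : 0 < A₂.card := Finset.card_pos.mpr ⟨b, hbA₂⟩
      omega
    have hkc : kc ends (insert a (A₂.erase b)) = kc ends A₂ := by omega
    exact ⟨by rw [swapEdge, hcard, hkc]; exact hF₂.1,
      by rw [swapEdge, hkc]; exact hF₂.2⟩
  by_cases hbS : b ∈ S
  · exact (hEA₁ b hbS hbA₁).2 ⟨a, ha₁, hba, hSF₁⟩
  · exact (hIA₂ b hbA₂ hbS).2 ⟨a, ha₂, hba, hSF₂⟩

end Aux4

/-- Injectivity: distinct spanning forests yield distinct edge sets
`(A_f \ A_i) ∪ A_e`, for any choices of active subsets. -/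
theorem activity_map_injective {V E : Type} [Fintype V] [Fintype E] [DecidableEq E]
    [LinearOrder E] (ends : E → Sym2 V)
    (A₁ A₂ Ai₁ Ae₁ Ai₂ Ae₂ : Finset E)
    (hF₁ : IsSpanningForest ends A₁) (hF₂ : IsSpanningForest ends A₂)
    (hne : A₁ ≠ A₂)
    (hi₁ : Ai₁ ⊆ intAct ends A₁) (he₁ : Ae₁ ⊆ extAct ends A₁)
    (hi₂ : Ai₂ ⊆ intAct ends A₂) (he₂ : Ae₂ ⊆ extAct ends A₂) :
    (A₁ \ Ai₁) ∪ Ae₁ ≠ (A₂ \ Ai₂) ∪ Ae₂ := by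
  intro heq
  have hEA : ∀ (A Ai Ae : Finset E), Ae ⊆ extAct ends A → ∀ e, e ∈ (A \ Ai) ∪ Ae →
      e ∉ A → ExternallyActive ends A e := by
    intro A Ai Ae hAe e heS heA
    rcases Finset.mem_union.mp heS with h | h
    · exact absurd (Finset.mem_sdiff.mp h).1 heA
    · exact (Finset.mem_filter.mp (hAe h)).2
  have hIA : ∀ (A Ai Ae : Finset E), Ai ⊆ intAct ends A → ∀ e, e ∈ A →
      e ∉ (A \ Ai) ∪ Ae → InternallyActive ends A e := by
    intro A Ai Ae hAi e heA heS
    have hmem : e ∈ Ai := by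
      by_contra h
      exact heS (Finset.mem_union_left _ (Finset.mem_sdiff.mpr ⟨heA, h⟩))
    exact (Finset.mem_filter.mp (hAi hmem)).2
  have hDne : ((A₁ \ A₂) ∪ (A₂ \ A₁)).Nonempty := by
    rw [Finset.nonempty_iff_ne_empty]
    intro h
    rw [Finset.union_eq_empty, Finset.sdiff_eq_empty_iff_subset,
      Finset.sdiff_eq_empty_iff_subset] at h
    exact hne (Finset.Subset.antisymm h.1 h.2)
  set a := ((A₁ \ A₂) ∪ (A₂ \ A₁)).max' hDne with haDef
  have haD : a ∈ (A₁ \ A₂) ∪ (A₂ \ A₁) := Finset.max'_mem _ hDne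
  have hle : ∀ c ∈ (A₁ \ A₂) ∪ (A₂ \ A₁), c ≤ a := fun c hc => Finset.le_max' _ c hc
  rcases Finset.mem_union.mp haD with ha | ha
  · obtain ⟨ha₁, ha₂⟩ := Finset.mem_sdiff.mp ha
    refine main_aux ends A₁ A₂ ((A₁ \ Ai₁) ∪ Ae₁) hF₁ hF₂ a ha₁ ha₂ ?_ ?_ ?_
    · intro b hb₂ hb₁
      have hbD : b ∈ (A₁ \ A₂) ∪ (A₂ \ A₁) :=
        Finset.mem_union_right _ (Finset.mem_sdiff.mpr ⟨hb₂, hb₁⟩)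
      exact lt_of_le_of_ne (hle b hbD) (fun h => hb₁ (h ▸ ha₁))
    · exact fun e h1 h2 => hEA A₁ Ai₁ Ae₁ he₁ e h1 h2
    · intro e h1 h2
      rw [heq] at h2
      exact hIA A₂ Ai₂ Ae₂ hi₂ e h1 h2
  · obtain ⟨ha₂, ha₁⟩ := Finset.mem_sdiff.mp ha
    refine main_aux ends A₂ A₁ ((A₂ \ Ai₂) ∪ Ae₂) hF₂ hF₁ a ha₂ ha₁ ?_ ?_ ?_
    · intro b hb₁ hb₂
      have hbD : b ∈ (A₁ \ A₂) ∪ (A₂ \ A₁) :=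
        Finset.mem_union_left _ (Finset.mem_sdiff.mpr ⟨hb₁, hb₂⟩)
      exact lt_of_le_of_ne (hle b hbD) (fun h => hb₂ (h ▸ ha₂))
    · exact fun e h1 h2 => hEA A₂ Ai₂ Ae₂ he₂ e h1 h2
    · intro e h1 h2
      rw [← heq] at h2
      exact hIA A₁ Ai₁ Ae₁ hi₁ e h1 h2
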